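/- Asymptotic expansion: ν²·f(ν) → σ_{p,V}/2 as ν → ∞, where σ_{p,V} = Σ_i p_i V_i² − (Σ_i p_i V_i)² is the variance of V under p. -/

import Mathlib

open Finset Filter Asymptotics

lemma cube_littleO {f : ℝ → ℝ} {C : ℝ} (h : ∀ᶠ x : ℝ in nhds 0, |f x| ≤ C * |x| ^ 3) :
    f =o[nhds (0:ℝ)] fun x => x ^ 2 := by
  have h1 : f =O[nhds (0:ℝ)] fun x => x ^ 3 := by
    rw [isBigO_iff]
    exact ⟨C, by filter_upwards [h] with x hx; simpa [abs_pow] using hx⟩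
  exact h1.trans_isLittleO (isLittleO_pow_pow (by norm_num))

lemma abs_small (c : ℝ) : ∀ᶠ x : ℝ in nhds 0, |c * x| ≤ 1/2 := by
  have h : Filter.Tendsto (fun x : ℝ => |c * x|) (nhds 0) (nhds 0) := by
    simpa using ((continuous_const.mul continuous_id).abs.tendsto (0:ℝ))
  exact (h.eventually_lt_const (by norm_num : (0:ℝ) < 1/2)).mono fun x hx => hx.le

lemma log_bound {y : ℝ} (hy : |y| ≤ 1/2) : |Real.log (1 + y) - y + y ^ 2 / 2| ≤ 2 * |y| ^ 3 := by
  have h1 : |(-y)| < 1 := by rw [abs_neg]; linarith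
  have h2 := Real.abs_log_sub_add_sum_range_le h1 2
  have h3 : (∑ i ∈ Finset.range 2, (-y) ^ (i+1) / (i+1)) = -y + y^2/2 := by
    simp [Finset.sum_range_succ]; ring
  rw [h3, abs_neg] at h2
  norm_num at h2
  have h5 : |y| ^ 3 / (1 - |y|) ≤ 2 * |y| ^ 3 := by
    rw [div_le_iff₀ (by linarith)]
    have : 0 ≤ |y|^3 := by positivity
    nlinarith
  have h6 : Real.log (1+y) - y + y^2/2 = -y + y^2/2 + Real.log (1 + y) := by ring
  rw [h6]
  exact h2.trans h5

lemma log_quad (c : ℝ) :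
    (fun x : ℝ => Real.log (1 - c * x) + c * x + (c * x) ^ 2 / 2) =o[nhds 0] fun x => x ^ 2 := by
  apply cube_littleO (C := 2 * |c| ^ 3)
  filter_upwards [abs_small c] with x hx
  have h1 : |(-(c * x))| ≤ 1/2 := by rwa [abs_neg]
  have h2 := log_bound h1
  have h3 : Real.log (1 + -(c*x)) - -(c*x) + (-(c*x))^2/2
      = Real.log (1 - c*x) + c*x + (c*x)^2/2 := by ring_nf
  rw [h3, abs_neg, abs_mul] at h2
  calc _ ≤ 2 * (|c| * |x|) ^ 3 := h2
    _ = 2 * |c| ^ 3 * |x| ^ 3 := by ring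

lemma log_quad' :
    (fun y : ℝ => Real.log (1 + y) - y + y ^ 2 / 2) =o[nhds 0] fun y => y ^ 2 := by
  apply cube_littleO (C := 2)
  filter_upwards [abs_small 1] with y hy
  have := log_bound (by simpa using hy)
  simpa using this

lemma inv_quad (c : ℝ) :
    (fun x : ℝ => 1 / (1 - c * x) - 1 - c * x - (c * x) ^ 2) =o[nhds 0] fun x => x ^ 2 := by
  apply cube_littleO (C := 2 * |c| ^ 3)
  filter_upwards [abs_small c] with x hx
  have hne : (1:ℝ) - c * x ≠ 0 := by
    have := abs_le.1 hx
    intro h; nlinarith [this.1, this.2]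
  have h3 : 1 / (1 - c*x) - 1 - c*x - (c*x)^2 = (c*x)^3 / (1 - c*x) := by
    field_simp; ring
  rw [h3, abs_div]
  have hd : (1:ℝ)/2 ≤ |1 - c*x| := by
    have h4 := abs_sub_abs_le_abs_sub (1:ℝ) (c*x)
    rw [abs_one] at h4
    linarith
  calc |(c*x)^3| / |1 - c*x| ≤ |(c*x)^3| / (1/2) :=
        div_le_div_of_nonneg_left (abs_nonneg _) (by norm_num) hd
    _ = 2 * |c|^3 * |x|^3 := by rw [abs_pow, abs_mul]; ring

/-- Asymptotic expansion: ν² f(ν) → σ_{p,V}/2 as ν → ∞, where σ_{p,V} is the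
variance of V under p. -/
theorem f_asymptotic (n : ℕ) (p V : Fin n → ℝ)
    (hp0 : ∀ i, 0 ≤ p i) (hp1 : ∑ i, p i = 1) :
    Tendsto
      (fun ν : ℝ => ν ^ 2 *
        ((∑ i ∈ univ.filter (fun i => 0 < p i), p i * Real.log (ν - V i))
          + Real.log (∑ i ∈ univ.filter (fun i => 0 < p i), p i / (ν - V i))))
      atTop
      (nhds (((∑ i, p i * (V i) ^ 2) - (∑ i, p i * V i) ^ 2) / 2)) := by
  classical
  set P : Finset (Fin n) := univ.filter (fun i => 0 < p i) with hPdef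
  have hsum : ∀ w : Fin n → ℝ, ∑ i ∈ P, p i * w i = ∑ i, p i * w i := by
    intro w
    apply Finset.sum_filter_of_ne
    intro i _ h
    rcases (hp0 i).lt_or_eq with h' | h'
    · exact h'
    · exact absurd (by rw [← h']; ring) h
  have hPsum : ∑ i ∈ P, p i = 1 := by
    rw [← hp1]
    apply Finset.sum_filter_of_ne
    intro i _ h
    exact (hp0 i).lt_of_ne' h
  set m : ℝ := ∑ i, p i * V i with hm
  set s : ℝ := ∑ i, p i * V i ^ 2 with hs
  have hmP : ∑ i ∈ P, p i * V i = m := hsum V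
  have hsP : ∑ i ∈ P, p i * V i ^ 2 = s := hsum (fun i => V i ^ 2)
  set u : ℝ → ℝ := fun x => (∑ i ∈ P, p i / (1 - V i * x)) - 1 with hu
  have e1 : ∀ x : ℝ, ∑ i ∈ P, p i * (V i * x) = m * x := by
    intro x
    rw [← hmP, Finset.sum_mul]
    exact Finset.sum_congr rfl fun i _ => (mul_assoc _ _ _).symm
  have e2 : ∀ x : ℝ, ∑ i ∈ P, p i * ((V i * x) ^ 2 / 2) = s * x ^ 2 / 2 := by
    intro x
    rw [← hsP, Finset.sum_mul, Finset.sum_div]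
    exact Finset.sum_congr rfl fun i _ => by ring
  have e3 : ∀ x : ℝ, ∑ i ∈ P, p i * (V i * x) ^ 2 = s * x ^ 2 := by
    intro x
    rw [← hsP, Finset.sum_mul]
    exact Finset.sum_congr rfl fun i _ => by ring
  -- expansion of the log sum
  have h2 : (fun x : ℝ => (∑ i ∈ P, p i * Real.log (1 - V i * x)) + m * x + s * x ^ 2 / 2)
      =o[nhds 0] fun x => x ^ 2 := by
    have key : ∀ x : ℝ,
        (∑ i ∈ P, p i * (Real.log (1 - V i * x) + V i * x + (V i * x) ^ 2 / 2))
          = (∑ i ∈ P, p i * Real.log (1 - V i * x)) + m * x + s * x ^ 2 / 2 := by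
      intro x
      simp only [mul_add, Finset.sum_add_distrib, e1 x, e2 x]
    exact (Asymptotics.IsLittleO.sum fun i _ =>
      ((log_quad (V i)).const_mul_left (p i))).congr_left fun x => (Finset.sum_apply x _ _).trans (key x)
  -- expansion of u
  have key3 : ∀ x : ℝ, ∑ i ∈ P, p i * (1 / (1 - V i * x) - 1 - V i * x - (V i * x) ^ 2)
      = u x - m * x - s * x ^ 2 := by
    intro x
    have e4 : ∑ i ∈ P, p i * (1 / (1 - V i * x)) = ∑ i ∈ P, p i / (1 - V i * x) :=
      Finset.sum_congr rfl fun i _ => mul_one_div _ _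
    simp only [mul_sub, mul_one, Finset.sum_sub_distrib, e4, hPsum, e1 x, e3 x, hu]
  have h3 : (fun x : ℝ => u x - m * x - s * x ^ 2) =o[nhds 0] fun x => x ^ 2 :=
    (Asymptotics.IsLittleO.sum fun i _ =>
      ((inv_quad (V i)).const_mul_left (p i))).congr_left fun x => (Finset.sum_apply x _ _).trans (key3 x)
  have hxO : (fun x : ℝ => x ^ 2) =O[nhds 0] fun x : ℝ => x := by
    have := (isLittleO_pow_pow (𝕜 := ℝ) (show 1 < 2 by norm_num)).isBigO
    simpa using this
  have hlin : ∀ c : ℝ, (fun x : ℝ => c * x) =O[nhds 0] fun x : ℝ => x :=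
    fun c => (isBigO_refl _ _).const_mul_left c
  have huO : u =O[nhds 0] fun x : ℝ => x := by
    have hmsO : (fun x : ℝ => m * x + s * x ^ 2) =O[nhds 0] fun x : ℝ => x :=
      (hlin m).add (((isBigO_refl (fun x : ℝ => x ^ 2) (nhds 0)).const_mul_left s).trans hxO)
    exact ((h3.isBigO.trans hxO).add hmsO).congr_left fun x => by ring
  have hu0 : Tendsto u (nhds 0) (nhds 0) := huO.trans_tendsto (continuous_id.tendsto 0)
  have huuO : (fun x => (u x) ^ 2) =O[nhds 0] fun x : ℝ => x ^ 2 := by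
    simpa [pow_two] using huO.mul huO
  have h4 : (fun x => Real.log (1 + u x) - u x + (u x) ^ 2 / 2) =o[nhds 0] fun x : ℝ => x ^ 2 := by
    have := log_quad'.comp_tendsto hu0
    simp only [Function.comp_def] at this
    exact this.trans_isBigO huuO
  have h5 : (fun x => (u x) ^ 2 - m ^ 2 * x ^ 2) =o[nhds 0] fun x : ℝ => x ^ 2 := by
    have hb : (fun x : ℝ => s * x ^ 2) =o[nhds 0] fun x : ℝ => x := by
      have := (isLittleO_pow_pow (𝕜 := ℝ) (show 1 < 2 by norm_num)).const_mul_left s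
      simpa using this
    have ha : (fun x => u x - m * x) =o[nhds 0] fun x : ℝ => x :=
      ((h3.trans_isBigO hxO).add hb).congr_left fun x => by ring
    have hc : (fun x => u x + m * x) =O[nhds 0] fun x : ℝ => x := huO.add (hlin m)
    exact (ha.mul_isBigO hc).congr (fun x => by ring) (fun x => (pow_two x).symm)
  have hg : (fun x => ((∑ i ∈ P, p i * Real.log (1 - V i * x)) + Real.log (1 + u x))
      - (s - m ^ 2) / 2 * x ^ 2) =o[nhds 0] fun x : ℝ => x ^ 2 := by
    have := ((h2.add h4).add h3).sub (h5.const_mul_left (1/2))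
    exact this.congr_left fun x => by ring
  -- limit along 𝓝[>] 0
  have htend : Tendsto (fun x : ℝ =>
      ((∑ i ∈ P, p i * Real.log (1 - V i * x)) + Real.log (1 + u x)) / x ^ 2)
      (nhdsWithin 0 (Set.Ioi 0)) (nhds ((s - m ^ 2) / 2)) := by
    have h0 := (hg.mono (show nhdsWithin (0:ℝ) (Set.Ioi 0) ≤ nhds 0 from
      nhdsWithin_le_nhds)).tendsto_div_nhds_zero
    have h1 := h0.add_const ((s - m ^ 2) / 2)
    rw [zero_add] at h1
    refine Tendsto.congr' ?_ h1
    filter_upwards [self_mem_nhdsWithin] with x hx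
    have hx0 : x ≠ 0 := ne_of_gt hx
    have hx2 : x ^ 2 ≠ 0 := pow_ne_zero 2 hx0
    rw [sub_div, mul_div_assoc, div_self hx2]; ring
  have hcomp := htend.comp tendsto_inv_atTop_nhdsGT_zero
  refine Tendsto.congr' ?_ hcomp
  filter_upwards [eventually_ge_atTop ((∑ i, |V i|) + 1)] with ν hν
  simp only [Function.comp_apply]
  have hV0 : (0:ℝ) ≤ ∑ i, |V i| := Finset.sum_nonneg fun i _ => abs_nonneg _
  have hν1 : (1:ℝ) ≤ ν := by linarith
  have hν0 : (0:ℝ) < ν := by linarith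
  have hVi : ∀ i, V i ≤ ν - 1 := by
    intro i
    have h1 : |V i| ≤ ∑ j, |V j| :=
      Finset.single_le_sum (fun j _ => abs_nonneg (V j)) (Finset.mem_univ i)
    have h2 := le_abs_self (V i)
    linarith
  have hpos : ∀ i, 0 < 1 - V i * ν⁻¹ := by
    intro i
    have h1 : 1 - V i * ν⁻¹ = (ν - V i) * ν⁻¹ := by field_simp
    rw [h1]
    exact mul_pos (by linarith [hVi i]) (inv_pos.2 hν0)
  have hfac : ∀ i, ν - V i = ν * (1 - V i * ν⁻¹) := by
    intro i; field_simp
  have hterm1 : ∑ i ∈ P, p i * Real.log (ν - V i)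
      = Real.log ν + ∑ i ∈ P, p i * Real.log (1 - V i * ν⁻¹) := by
    have : ∀ i ∈ P, p i * Real.log (ν - V i)
        = p i * Real.log ν + p i * Real.log (1 - V i * ν⁻¹) := by
      intro i _
      rw [hfac i, Real.log_mul (ne_of_gt hν0) (ne_of_gt (hpos i)), mul_add]
    rw [Finset.sum_congr rfl this, Finset.sum_add_distrib, ← Finset.sum_mul, hPsum, one_mul]
  have hS : (0:ℝ) < ∑ i ∈ P, p i / (1 - V i * ν⁻¹) := by
    have hne : P.Nonempty := by
      by_contra h
      rw [Finset.not_nonempty_iff_eq_empty] at h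
      rw [h, Finset.sum_empty] at hPsum
      norm_num at hPsum
    refine Finset.sum_pos (fun i hi => ?_) hne
    rw [hPdef, Finset.mem_filter] at hi
    exact div_pos hi.2 (hpos i)
  have hterm2 : (∑ i ∈ P, p i / (ν - V i)) = ν⁻¹ * ∑ i ∈ P, p i / (1 - V i * ν⁻¹) := by
    rw [Finset.mul_sum]
    refine Finset.sum_congr rfl fun i _ => ?_
    rw [hfac i]
    rw [div_mul_eq_div_div_swap, div_eq_inv_mul]
  have hlog2 : Real.log (∑ i ∈ P, p i / (ν - V i))
      = -Real.log ν + Real.log (1 + u ν⁻¹) := by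
    have h1 : (1:ℝ) + u ν⁻¹ = ∑ i ∈ P, p i / (1 - V i * ν⁻¹) := by rw [hu]; ring
    rw [hterm2, Real.log_mul (inv_ne_zero (ne_of_gt hν0)) (ne_of_gt hS), Real.log_inv, h1]
  rw [hterm1, hlog2]
  have hν2 : (ν⁻¹ : ℝ) ^ 2 ≠ 0 := by positivity
  field_simp
  ring
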